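/- arXiv:2107.11612 — 6 statements merged into one kernel-verified Lean document; each statement's English description precedes it below -/
import Mathlib

section
/- The image of the map (x, y, z) ↦ (x, y, x + y + 2z) applied to the set of positive semi-definite symmetric 2×2 matrices [[x, z],[z, y]] of rank ≤ 1 is exactly the set of points (a, b, c) in the closed first octant satisfying a² + b² + c² = 2(ab + ac + bc). -/
/-- The image of rank ≤ 1 PSD 2×2 matrices `[[x,z],[z,y]]` (i.e. `x,y ≥ 0`,
`z² = xy`) under `(x,y,z) ↦ (x, y, x+y+2z)` is the cone surface
`a² + b² + c² = 2(ab + ac + bc)` in the closed first octant. -/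
theorem stmt8 :
    {p : ℝ × ℝ × ℝ | ∃ x y z : ℝ, 0 ≤ x ∧ 0 ≤ y ∧ z ^ 2 = x * y ∧
        p = (x, y, x + y + 2 * z)}
      = {p : ℝ × ℝ × ℝ | 0 ≤ p.1 ∧ 0 ≤ p.2.1 ∧ 0 ≤ p.2.2 ∧
          p.1 ^ 2 + p.2.1 ^ 2 + p.2.2 ^ 2
            = 2 * (p.1 * p.2.1 + p.1 * p.2.2 + p.2.1 * p.2.2)} := by
  ext ⟨a, b, c⟩
  simp only [Set.mem_setOf_eq, Prod.mk.injEq]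
  constructor
  · rintro ⟨x, y, z, hx, hy, hz, rfl, rfl, rfl⟩
    refine ⟨hx, hy, by nlinarith [sq_nonneg (a - b)], by nlinarith⟩
  · rintro ⟨ha, hb, hc, h⟩
    exact ⟨a, b, (c - a - b) / 2, ha, hb, by nlinarith, rfl, rfl, by ring⟩
end

section
/- Let m, n, p > 0 and let R(x,y,z) = (−x(p(x²−(y−z)²) + 2(m+n)yz), −y(n(y²−(z−x)²) + 2(m+p)xz), −z(m(z²−(x−y)²) + 2(n+p)xy)) and F(x,y,z) = x² + y² + z² − 2(xy + xz + yz). Then for all x, y, z ≥ 0 with F(x,y,z) = 0, R(x,y,z) · ∇F(x,y,z) = −8xyz(px + ny + mz) ≤ 0. -/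
/-- Type A Ricci vector field: on the cone surface `F = 0` in the first octant,
`R · ∇F = -8xyz(px + ny + mz) ≤ 0`. -/
theorem stmt10 (m n p x y z : ℝ) (hm : 0 < m) (hn : 0 < n) (hp : 0 < p)
    (hx : 0 ≤ x) (hy : 0 ≤ y) (hz : 0 ≤ z)
    (hF : x ^ 2 + y ^ 2 + z ^ 2 - 2 * (x * y + x * z + y * z) = 0) :
    (-x * (p * (x ^ 2 - (y - z) ^ 2) + 2 * (m + n) * y * z)) * (2 * (x - y - z))
      + (-y * (n * (y ^ 2 - (z - x) ^ 2) + 2 * (m + p) * x * z)) * (2 * (-x + y - z))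
      + (-z * (m * (z ^ 2 - (x - y) ^ 2) + 2 * (n + p) * x * y)) * (2 * (-x - y + z))
      = -8 * x * y * z * (p * x + n * y + m * z)
    ∧ -8 * x * y * z * (p * x + n * y + m * z) ≤ 0 := by
  constructor
  · linear_combination (-2 * (x + y + z) * (p * x + n * y + m * z)) * hF
  · have h : 0 ≤ x * y * z * (p * x + n * y + m * z) := by positivity
    nlinarith [h]
end

section
/- Let ℓ ≥ 4 and let R(x,y,z) = (−x((ℓ−2)(x²−(y−z)²) + 2ℓyz), −y((ℓ−2)(y²−(z−x)²) + 2ℓxz), −z(2(z²−(x−y)²) + 4(ℓ−2)xy)) and F(x,y,z) = x² + y² + z² − 2(xy + xz + yz). Then for all x, y, z ≥ 0 with F(x,y,z) = 0, R(x,y,z) · ∇F(x,y,z) ≤ 0. -/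
/-- Type D Ricci vector field: on the cone surface `F = 0` in the first octant,
`R · ∇F ≤ 0`, for `ℓ ≥ 4`. -/
theorem stmt11 (l x y z : ℝ) (hl : 4 ≤ l)
    (hx : 0 ≤ x) (hy : 0 ≤ y) (hz : 0 ≤ z)
    (hF : x ^ 2 + y ^ 2 + z ^ 2 - 2 * (x * y + x * z + y * z) = 0) :
    (-x * ((l - 2) * (x ^ 2 - (y - z) ^ 2) + 2 * l * y * z)) * (2 * (x - y - z))
      + (-y * ((l - 2) * (y ^ 2 - (z - x) ^ 2) + 2 * l * x * z)) * (2 * (-x + y - z))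
      + (-z * (2 * (z ^ 2 - (x - y) ^ 2) + 4 * (l - 2) * x * y)) * (2 * (-x - y + z))
      ≤ 0 := by
  obtain ⟨u, hu0, hu⟩ : ∃ u, 0 ≤ u ∧ u ^ 2 = x := ⟨Real.sqrt x, Real.sqrt_nonneg x, Real.sq_sqrt hx⟩
  obtain ⟨v, hv0, hv⟩ : ∃ v, 0 ≤ v ∧ v ^ 2 = y := ⟨Real.sqrt y, Real.sqrt_nonneg y, Real.sq_sqrt hy⟩
  obtain ⟨w, hw0, hw⟩ : ∃ w, 0 ≤ w ∧ w ^ 2 = z := ⟨Real.sqrt z, Real.sqrt_nonneg z, Real.sq_sqrt hz⟩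
  subst hu hv hw
  have key : (u + v + w) * ((v + w - u) * ((u + w - v) * (u + v - w))) = 0 := by
    linear_combination -hF
  have hvw : 0 ≤ v * w := mul_nonneg hv0 hw0
  have huw : 0 ≤ u * w := mul_nonneg hu0 hw0
  have huv : 0 ≤ u * v := mul_nonneg hu0 hv0
  rcases mul_eq_zero.mp key with h | h
  · have hu' : u = 0 := by linarith
    have hv' : v = 0 := by linarith
    have hw' : w = 0 := by linarith
    subst hu' hv' hw'
    norm_num
  rcases mul_eq_zero.mp h with h | h
  · -- u = v + w
    have hu' : u = v + w := by linarith
    subst hu'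
    have hQ : 0 ≤ 2 * (l - 2) * v ^ 2 + 2 * (l - 2) * (v * w) + l * w ^ 2 := by
      nlinarith [sq_nonneg v, sq_nonneg w]
    have hP : 0 ≤ 8 * v ^ 2 * w ^ 2 * (v + w) ^ 2 *
        (2 * (l - 2) * v ^ 2 + 2 * (l - 2) * (v * w) + l * w ^ 2) := by
      have : (0:ℝ) ≤ 8 * v ^ 2 * w ^ 2 * (v + w) ^ 2 := by positivity
      exact mul_nonneg this hQ
    nlinarith [hP]
  rcases mul_eq_zero.mp h with h | h
  · -- v = u + w
    have hv' : v = u + w := by linarith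
    subst hv'
    have hQ : 0 ≤ 2 * (l - 2) * u ^ 2 + 2 * (l - 2) * (u * w) + l * w ^ 2 := by
      nlinarith [sq_nonneg u, sq_nonneg w]
    have hP : 0 ≤ 8 * u ^ 2 * w ^ 2 * (u + w) ^ 2 *
        (2 * (l - 2) * u ^ 2 + 2 * (l - 2) * (u * w) + l * w ^ 2) := by
      have : (0:ℝ) ≤ 8 * u ^ 2 * w ^ 2 * (u + w) ^ 2 := by positivity
      exact mul_nonneg this hQ
    nlinarith [hP]
  · -- w = u + v
    have hw' : w = u + v := by linarith
    subst hw'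
    have hQ : 0 ≤ l * u ^ 2 + 4 * (u * v) + l * v ^ 2 := by
      nlinarith [sq_nonneg u, sq_nonneg v]
    have hP : 0 ≤ 8 * u ^ 2 * v ^ 2 * (u + v) ^ 2 *
        (l * u ^ 2 + 4 * (u * v) + l * v ^ 2) := by
      have : (0:ℝ) ≤ 8 * u ^ 2 * v ^ 2 * (u + v) ^ 2 := by positivity
      exact mul_nonneg this hQ
    nlinarith [hP]
end

section
/- There is no continuous section of the restriction of the Gram map γ : X ↦ X Xᵀ from the rank-k matrices supported in the first k columns of gl(r,ℝ) onto the rank-k positive semi-definite symmetric r×r matrices, for 0 < k < r. -/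
open Matrix

noncomputable def Xmat (r k : ℕ) (t : ℝ) : Matrix (Fin r) (Fin r) ℝ :=
  fun i j =>
    if (j : ℕ) = 0 then
      (if (i : ℕ) = 0 then Real.cos t else if (i : ℕ) = r - 1 then Real.sin t else 0)
    else if (j : ℕ) < k then (if i = j then 1 else 0) else 0

lemma XtX (r k : ℕ) (hk : 0 < k) (hkr : k < r) (t : ℝ) :
    (Xmat r k t)ᵀ * Xmat r k t
      = diagonal (fun i : Fin r => if (i : ℕ) < k then (1:ℝ) else 0) := by
  ext i j
  rw [mul_apply]
  simp only [transpose_apply, Xmat, diagonal_apply]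
  have hr2 : 2 ≤ r := by omega
  have hr10 : r - 1 ≠ 0 := by omega
  by_cases hj0 : (j : ℕ) = 0
  · by_cases hi0 : (i : ℕ) = 0
    · -- both column 0 : cos² + sin² = 1
      have hij : i = j := Fin.ext (by omega)
      simp only [hj0, hi0, if_true, hij, if_pos rfl]
      have key : ∀ m : Fin r,
          ((if (m:ℕ) = 0 then Real.cos t else if (m:ℕ) = r-1 then Real.sin t else 0) *
           (if (m:ℕ) = 0 then Real.cos t else if (m:ℕ) = r-1 then Real.sin t else 0))
          = (if m = (⟨0, by omega⟩ : Fin r) then Real.cos t ^ 2 else 0)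
            + (if m = (⟨r-1, by omega⟩ : Fin r) then Real.sin t ^ 2 else 0) := by
        intro m
        by_cases hm0 : (m:ℕ) = 0
        · simp [hm0, Fin.ext_iff, Ne.symm hr10, sq]
        · by_cases hmr : (m:ℕ) = r-1
          · simp [hm0, hmr, Fin.ext_iff, sq, hr10]
          · simp [hm0, hmr, Fin.ext_iff]
      rw [Finset.sum_congr rfl fun m _ => key m, Finset.sum_add_distrib,
        Finset.sum_ite_eq' Finset.univ, Finset.sum_ite_eq' Finset.univ]
      simp [Real.cos_sq_add_sin_sq, hj0, hk]
    · -- i ≠ 0, j = 0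
      have hij : i ≠ j := fun h => hi0 (by rw [h]; exact hj0)
      rw [Finset.sum_eq_zero, eq_comm]
      · simp [hij]
      · intro x _
        by_cases hik : (i : ℕ) < k
        · have hir : (i:ℕ) ≠ r - 1 := by omega
          by_cases hx : x = i
          · subst hx; simp [hi0, hik, hir, hj0]
          · simp [hi0, hik, hx]
        · simp [hi0, hik]
  · by_cases hjk : (j : ℕ) < k
    · have hjr : (j:ℕ) ≠ r - 1 := by omega
      simp only [hj0, hjk, if_true, if_false, mul_ite, mul_one, mul_zero,
        Finset.sum_ite_eq' Finset.univ, Finset.mem_univ]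
      by_cases hij : i = j
      · subst hij; simp [hj0, hjk]
      · by_cases hi0 : (i:ℕ) = 0
        · simp [hi0, hj0, hjr, hij]
        · simp [hi0, hij, Ne.symm hij]
    · by_cases hij : i = j
      · subst hij; simp [hj0, hjk, mul_zero]
      · simp [hj0, hjk, hij, mul_zero]

lemma Xcont (r k : ℕ) : Continuous fun t => Xmat r k t := by
  apply continuous_matrix; intro i j
  simp only [Xmat]
  split_ifs <;>
    first
      | exact Real.continuous_cos
      | exact Real.continuous_sin
      | exact continuous_const

lemma Xpi (r k : ℕ) (hk : 0 < k) (hkr : k < r) :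
    Xmat r k Real.pi
      = Xmat r k 0 * diagonal (fun i : Fin r => if (i:ℕ) = 0 then (-1:ℝ) else 1) := by
  ext i j
  rw [mul_diagonal]
  simp only [Xmat]
  by_cases hj0 : (j:ℕ) = 0 <;>
    simp [hj0, Real.cos_pi, Real.sin_pi, Real.cos_zero, Real.sin_zero] <;>
    split_ifs <;> norm_num

/-- For `0 < k < r` there is no continuous section of the Gram map
`γ(X) = X Xᵀ` from the rank-`k` matrices supported in the first `k` columns
onto the rank-`k` positive semi-definite matrices. -/
theorem stmt15 (r k : ℕ) (hk : 0 < k) (hkr : k < r) :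
    ¬ ∃ s : {A : Matrix (Fin r) (Fin r) ℝ // A.PosSemidef ∧ A.rank = k} →
        Matrix (Fin r) (Fin r) ℝ,
      Continuous s ∧ ∀ Y, (s Y).rank = k ∧
        (∀ i j : Fin r, k ≤ (j : ℕ) → s Y i j = 0) ∧ s Y * (s Y)ᵀ = Y.val := by
  rintro ⟨s, hscont, hs⟩
  set Pk : Matrix (Fin r) (Fin r) ℝ :=
    diagonal (fun i => if (i:ℕ) < k then 1 else 0) with hPkdef
  set Q : Matrix (Fin r) (Fin r) ℝ :=
    diagonal (fun i => if (i:ℕ) < k then 0 else 1) with hQdef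
  have hPQ : Pk + Q = 1 := by
    rw [hPkdef, hQdef, diagonal_add, ← diagonal_one]
    exact congrArg diagonal (funext fun i => by split_ifs <;> ring)
  have hPP : Pk * Pk = Pk := by
    rw [hPkdef, diagonal_mul_diagonal]
    exact congrArg diagonal (funext fun i => by split_ifs <;> ring)
  have hQQ : Q * Q = Q := by
    rw [hQdef, diagonal_mul_diagonal]
    exact congrArg diagonal (funext fun i => by split_ifs <;> ring)
  have hQt : Qᵀ = Q := diagonal_transpose _
  -- the loop of rank-k PSD matrices
  have hpsd : ∀ t, (Xmat r k t * (Xmat r k t)ᵀ).PosSemidef := fun t => by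
    have := posSemidef_self_mul_conjTranspose (Xmat r k t)
    rwa [conjTranspose_eq_transpose_of_trivial] at this
  have hcard : Fintype.card {i : Fin r // (i:ℕ) < k} = k := by
    rw [Fintype.card_congr
      (⟨fun x => ⟨x.1, x.2⟩, fun y => ⟨⟨y.1, y.2.trans hkr⟩, y.2⟩,
        fun x => Subtype.ext (Fin.ext rfl), fun y => rfl⟩ :
        {i : Fin r // (i:ℕ) < k} ≃ Fin k), Fintype.card_fin]
  have hrank : ∀ t, (Xmat r k t * (Xmat r k t)ᵀ).rank = k := fun t => by
    rw [rank_self_mul_transpose, ← rank_transpose_mul_self, XtX r k hk hkr,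
      rank_diagonal]
    rw [Fintype.card_congr (Equiv.subtypeEquivRight
      (fun i : Fin r => by split_ifs <;> simp_all :
        ∀ i : Fin r, ((if (i:ℕ) < k then (1:ℝ) else 0) ≠ 0 ↔ (i:ℕ) < k)))]
    exact hcard
  set Yel : ℝ → {A : Matrix (Fin r) (Fin r) ℝ // A.PosSemidef ∧ A.rank = k} :=
    fun t => ⟨Xmat r k t * (Xmat r k t)ᵀ, hpsd t, hrank t⟩ with hYel
  have hYcont : Continuous Yel :=
    Continuous.subtype_mk ((Xcont r k).matrix_mul (Xcont r k).matrix_transpose) _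
  set M : ℝ → Matrix (Fin r) (Fin r) ℝ :=
    fun t => (Xmat r k t)ᵀ * s (Yel t) + Q with hMdef
  -- M t is invertible for every t
  have hMunit : ∀ t, M t * (M t)ᵀ = 1 := by
    intro t
    obtain ⟨-, h2, h3⟩ := hs (Yel t)
    set X := Xmat r k t with hX
    set st := s (Yel t) with hst
    have hNQ : (Xᵀ * st) * Q = 0 := by
      ext i j
      rw [hQdef, mul_diagonal]
      by_cases hjk : (j:ℕ) < k
      · simp [hjk]
      · rw [mul_apply]
        rw [Finset.sum_eq_zero fun m _ => by
          rw [transpose_apply, h2 m j (le_of_not_gt hjk), mul_zero]]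
        simp
    have hNN : (Xᵀ * st) * (Xᵀ * st)ᵀ = Pk := by
      rw [transpose_mul, transpose_transpose]
      calc Xᵀ * st * (stᵀ * X) = Xᵀ * (st * stᵀ) * X := by
            rw [mul_assoc, mul_assoc, mul_assoc]
        _ = Xᵀ * (X * Xᵀ) * X := by rw [h3]
        _ = (Xᵀ * X) * (Xᵀ * X) := by rw [mul_assoc, mul_assoc, mul_assoc]
        _ = Pk * Pk := by rw [XtX r k hk hkr]
        _ = Pk := hPP
    have hQN : Q * (Xᵀ * st)ᵀ = 0 := by
      have := congrArg transpose hNQ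
      rwa [transpose_mul, hQt, transpose_zero] at this
    simp only [hMdef]
    rw [transpose_add, hQt, add_mul, mul_add, mul_add, hNN, hNQ, hQN, hQQ]
    rw [add_zero, zero_add, hPQ]
  have hdet : ∀ t, (M t).det ≠ 0 := by
    intro t h
    have := congrArg det (hMunit t)
    rw [det_mul, det_transpose, h, mul_zero, det_one] at this
    exact zero_ne_one this
  have hMcont : Continuous fun t => (M t).det := by
    apply Continuous.matrix_det
    exact ((Xcont r k).matrix_transpose.matrix_mul (hscont.comp hYcont)).add
      continuous_const
  -- monodromy: det (M π) = - det (M 0)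
  set H : Matrix (Fin r) (Fin r) ℝ :=
    diagonal (fun i => if (i:ℕ) = 0 then (-1:ℝ) else 1) with hHdef
  have hHt : Hᵀ = H := diagonal_transpose _
  have hHH : H * H = 1 := by
    rw [hHdef, diagonal_mul_diagonal, ← diagonal_one]
    exact congrArg diagonal (funext fun i => by split_ifs <;> ring)
  have hHQ : H * Q = Q := by
    rw [hHdef, hQdef, diagonal_mul_diagonal]
    refine congrArg diagonal (funext fun i => ?_)
    by_cases hik : (i:ℕ) < k
    · simp [hik]
    · have h0 : (i:ℕ) ≠ 0 := by omega
      simp [hik, h0]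
  have hYpi : Yel Real.pi = Yel 0 := by
    apply Subtype.ext
    show Xmat r k Real.pi * (Xmat r k Real.pi)ᵀ = _
    rw [Xpi r k hk hkr, transpose_mul, hHt]
    calc Xmat r k 0 * H * (H * (Xmat r k 0)ᵀ)
        = Xmat r k 0 * (H * H) * (Xmat r k 0)ᵀ := by
          rw [mul_assoc, mul_assoc, mul_assoc]
      _ = Xmat r k 0 * (Xmat r k 0)ᵀ := by rw [hHH, mul_one]
  have hMpi : M Real.pi = H * M 0 := by
    simp only [hMdef]
    rw [Xpi r k hk hkr, transpose_mul, hHt, hYpi, mul_add, hHQ, mul_assoc]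
  have hdetH : H.det = -1 := by
    rw [hHdef, det_diagonal,
      show (fun i : Fin r => if (i:ℕ) = 0 then (-1:ℝ) else 1)
        = fun i : Fin r => if i = (⟨0, by omega⟩ : Fin r) then (-1:ℝ) else 1 from
        funext fun i => by simp [Fin.ext_iff],
      Finset.prod_ite_eq' Finset.univ]
    simp
  have hflip : (M Real.pi).det = -(M 0).det := by
    rw [hMpi, det_mul, hdetH, neg_one_mul]
  -- intermediate value theorem contradiction
  rcases lt_or_gt_of_ne (hdet 0) with h0 | h0
  · have hmem : (0:ℝ) ∈ Set.Icc ((M 0).det) ((M Real.pi).det) :=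
      ⟨le_of_lt h0, by rw [hflip]; linarith⟩
    obtain ⟨t, -, ht⟩ := intermediate_value_Icc Real.pi_nonneg
      hMcont.continuousOn hmem
    exact hdet t ht
  · have hmem : (0:ℝ) ∈ Set.Icc ((M Real.pi).det) ((M 0).det) :=
      ⟨by rw [hflip]; linarith, le_of_lt h0⟩
    obtain ⟨t, -, ht⟩ := intermediate_value_Icc' Real.pi_nonneg
      hMcont.continuousOn hmem
    exact hdet t ht
end

section
/- Let H be the r×r matrix with identity block of size k×k in the upper left and zeros elsewhere, 0 < k < r. Then H is a symmetric projection (H = Hᵀ = H²), the orbit O(r)·H (left multiplication) equals the Stiefel manifold of orthonormal k-frames embedded as the first k columns, and γ⁻¹(H) ∩ gl(r,k) = O(k)·H where O(k) ⊂ O(r) is the block-embedded orthogonal group. -/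
open Matrix

private lemma sumH' {r k : ℕ} (f : Fin r → ℝ) (j : Fin r) :
    ∑ l, f l * (if l = j ∧ (l : ℕ) < k then 1 else 0) = if (j : ℕ) < k then f j else 0 := by
  rw [Finset.sum_eq_single j]
  · by_cases h : (j : ℕ) < k <;> simp [h]
  · intro l _ hl; simp [hl]
  · simp

private lemma sumDelta {r : ℕ} (i j : Fin r) :
    ∑ l : Fin r, (if i = l then (1:ℝ) else 0) * (if j = l then (1:ℝ) else 0)
      = if i = j then (1:ℝ) else 0 := by
  rw [Finset.sum_eq_single i]
  · by_cases h : i = j <;> simp [h, eq_comm]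
  · intro l _ hl; simp [Ne.symm hl]
  · simp

/-- For the projection `H = diag(I_k, 0)` with `0 < k < r`: `H` is a symmetric
projection, the orbit `O(r)·H` is the Stiefel manifold of orthonormal `k`-frames
embedded as the first `k` columns, and `γ⁻¹(H) ∩ gl(r,k) = O(k)·H` for the
block-embedded `O(k)`. -/
theorem stmt16 (r k : ℕ) (hk : 0 < k) (hkr : k < r) :
    let H : Matrix (Fin r) (Fin r) ℝ :=
      Matrix.of fun i j => if i = j ∧ (i : ℕ) < k then 1 else 0
    Hᵀ = H ∧ H * H = H ∧
    ({X : Matrix (Fin r) (Fin r) ℝ |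
        ∃ u ∈ Matrix.orthogonalGroup (Fin r) ℝ, X = u * H}
      = {X | (∀ i j : Fin r, k ≤ (j : ℕ) → X i j = 0) ∧ Xᵀ * X = H}) ∧
    ({X : Matrix (Fin r) (Fin r) ℝ |
        (∀ i j : Fin r, k ≤ (j : ℕ) → X i j = 0) ∧ X * Xᵀ = H}
      = {X | ∃ u ∈ Matrix.orthogonalGroup (Fin r) ℝ,
          (∀ i j : Fin r, (k ≤ (i : ℕ) ∨ k ≤ (j : ℕ)) →
            u i j = if i = j then 1 else 0) ∧ X = u * H}) := by
  intro H
  have hHdef : ∀ i j : Fin r, H i j = if i = j ∧ (i : ℕ) < k then 1 else 0 := fun i j => rfl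
  have starT : ∀ u : Matrix (Fin r) (Fin r) ℝ, star u = uᵀ := by
    intro u; ext i j; simp [Matrix.star_apply]
  -- part 1
  have hT : Hᵀ = H := by
    ext i j
    rw [transpose_apply, hHdef, hHdef]
    by_cases h : i = j
    · subst h; rfl
    · rw [if_neg (fun hh => h hh.1.symm), if_neg (fun hh => h hh.1)]
  -- part 2
  have hP : H * H = H := by
    ext i j
    rw [mul_apply]
    have : ∀ l, H i l * H l j = H i l * (if l = j ∧ (l : ℕ) < k then 1 else 0) := by
      intro l; rw [hHdef l j]
    simp_rw [this]
    rw [sumH']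
    by_cases hj : (j : ℕ) < k
    · rw [if_pos hj]
    · rw [if_neg hj, hHdef, if_neg]
      rintro ⟨rfl, hi⟩; exact hj hi
  -- multiplication by H on the right picks out first k columns
  have hmulH : ∀ (u : Matrix (Fin r) (Fin r) ℝ) (i j : Fin r),
      (u * H) i j = if (j : ℕ) < k then u i j else 0 := by
    intro u i j
    rw [mul_apply]
    have : ∀ l, u i l * H l j = u i l * (if l = j ∧ (l : ℕ) < k then 1 else 0) := by
      intro l; rw [hHdef l j]
    simp_rw [this]
    exact sumH' _ _
  refine ⟨hT, hP, ?_, ?_⟩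
  · -- part 3
    ext X
    simp only [Set.mem_setOf_eq]
    constructor
    · rintro ⟨u, hu, rfl⟩
      have huT : uᵀ * u = 1 := by
        have := (Matrix.mem_orthogonalGroup_iff' _ _).mp hu
        exact this
      refine ⟨fun i j hj => ?_, ?_⟩
      · rw [hmulH, if_neg (by omega)]
      · calc (u * H)ᵀ * (u * H) = Hᵀ * (uᵀ * u) * H := by
              rw [transpose_mul, Matrix.mul_assoc, ← Matrix.mul_assoc uᵀ u H,
                ← Matrix.mul_assoc]
          _ = H := by rw [huT, Matrix.mul_one, hT, hP]
    · rintro ⟨h0, hXX⟩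
      have hsum : ∀ i j : Fin r, ∑ l, X l i * X l j = if i = j ∧ (i : ℕ) < k then 1 else 0 := by
        intro i j
        have := congrFun (congrFun hXX i) j
        rw [mul_apply] at this
        simp only [transpose_apply] at this
        rw [this, hHdef]
      set v : Fin r → EuclideanSpace ℝ (Fin r) := fun j => WithLp.toLp 2 (fun l => X l j) with hv
      have hon : Orthonormal ℝ (Set.restrict {j : Fin r | (j : ℕ) < k} v) := by
        rw [orthonormal_iff_ite]
        rintro ⟨i, hi⟩ ⟨j, hj⟩
        have : (inner ℝ (v i) (v j) : ℝ) = ∑ l, X l i * X l j := by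
          simp [PiLp.inner_apply, RCLike.inner_apply, hv, mul_comm]
        show inner ℝ (v i) (v j) = _
        rw [this, hsum]
        simp only [Set.mem_setOf_eq] at hi
        by_cases h : i = j
        · subst h; simp [hi]
        · rw [if_neg (fun hh => h hh.1), if_neg (by simpa using h)]
      obtain ⟨b, hb⟩ := hon.exists_orthonormalBasis_extension_of_card_eq
        (by simp [finrank_euclideanSpace_fin])
      refine ⟨Matrix.of fun i j => b j i, ?_, ?_⟩
      · rw [Matrix.mem_orthogonalGroup_iff']
        ext i j
        have hbo := orthonormal_iff_ite.mp b.orthonormal i j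
        have : (inner ℝ (b i) (b j) : ℝ) = ∑ l, b i l * b j l := by
          simp [PiLp.inner_apply, RCLike.inner_apply, mul_comm]
        rw [this] at hbo
        rw [mul_apply]
        simp only [transpose_apply, Matrix.of_apply]
        rw [hbo, Matrix.one_apply]
      · ext i j
        rw [hmulH]
        by_cases hj : (j : ℕ) < k
        · rw [if_pos hj]
          have := hb j hj
          show X i j = b j i
          rw [this, hv]
        · rw [if_neg hj]
          exact h0 i j (le_of_not_gt hj)
  · -- part 4
    ext X
    simp only [Set.mem_setOf_eq]
    constructor
    · rintro ⟨h0, hXX⟩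
      have hsum : ∀ i j : Fin r, ∑ l, X i l * X j l = if i = j ∧ (i : ℕ) < k then 1 else 0 := by
        intro i j
        have := congrFun (congrFun hXX i) j
        rw [mul_apply] at this
        simp only [transpose_apply] at this
        rw [this, hHdef]
      have hrow : ∀ i j : Fin r, k ≤ (i : ℕ) → X i j = 0 := by
        intro i j hi
        have h1 : ∑ l, X i l * X i l = 0 := by
          rw [hsum, if_neg]; rintro ⟨-, h⟩; omega
        have h2 := (Finset.sum_eq_zero_iff_of_nonneg
          (fun l _ => mul_self_nonneg (X i l))).mp h1 j (Finset.mem_univ j)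
        exact mul_self_eq_zero.mp h2
      set u : Matrix (Fin r) (Fin r) ℝ :=
        Matrix.of fun i j => if (i : ℕ) < k ∧ (j : ℕ) < k then X i j
          else (if i = j then 1 else 0) with hudef
      have hue : ∀ i j : Fin r, u i j = if (i : ℕ) < k ∧ (j : ℕ) < k then X i j
          else (if i = j then 1 else 0) := fun i j => rfl
      refine ⟨u, ?_, ?_, ?_⟩
      · rw [Matrix.mem_orthogonalGroup_iff]
        ext i j
        rw [mul_apply]
        simp only [transpose_apply]
        rw [Matrix.one_apply]
        by_cases hi : (i : ℕ) < k <;> by_cases hj : (j : ℕ) < k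
        · have : ∀ l, u i l * u j l = X i l * X j l := by
            intro l
            by_cases hl : (l : ℕ) < k
            · rw [hue i l, if_pos ⟨hi, hl⟩, hue j l, if_pos ⟨hj, hl⟩]
            · rw [hue i l, hue j l,
                if_neg (show ¬((i:ℕ) < k ∧ (l:ℕ) < k) from fun h => hl h.2),
                if_neg (show ¬((j:ℕ) < k ∧ (l:ℕ) < k) from fun h => hl h.2),
                if_neg (show ¬ i = l from Fin.ne_of_val_ne (by omega)),
                if_neg (show ¬ j = l from Fin.ne_of_val_ne (by omega)),
                h0 i l (le_of_not_gt hl), h0 j l (le_of_not_gt hl), mul_zero]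
          simp_rw [this]
          rw [hsum]
          by_cases h : i = j
          · simp [h, h ▸ hi]
          · simp [h]
        · have : ∀ l, u i l * u j l = 0 := by
            intro l
            by_cases hl : (l : ℕ) < k
            · rw [hue j l, if_neg (fun h => hj h.1),
                if_neg (show ¬ j = l from Fin.ne_of_val_ne (by omega)), mul_zero]
            · rw [hue i l, if_neg (fun h => hl h.2),
                if_neg (show ¬ i = l from Fin.ne_of_val_ne (by omega)), zero_mul]
          simp_rw [this]
          rw [Finset.sum_const_zero, if_neg (by omega)]
        · have : ∀ l, u i l * u j l = 0 := by
            intro l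
            by_cases hl : (l : ℕ) < k
            · rw [hue i l, if_neg (fun h => hi h.1),
                if_neg (show ¬ i = l from Fin.ne_of_val_ne (by omega)), zero_mul]
            · rw [hue j l, if_neg (fun h => hl h.2),
                if_neg (show ¬ j = l from Fin.ne_of_val_ne (by omega)), mul_zero]
          simp_rw [this]
          rw [Finset.sum_const_zero, if_neg (by omega)]
        · have : ∀ l, u i l * u j l
              = (if i = l then (1:ℝ) else 0) * (if j = l then (1:ℝ) else 0) := by
            intro l
            rw [hue i l, hue j l, if_neg (show ¬((i:ℕ) < k ∧ (l:ℕ) < k) from fun h => hi h.1),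
              if_neg (show ¬((j:ℕ) < k ∧ (l:ℕ) < k) from fun h => hj h.1)]
          simp_rw [this]
          exact sumDelta i j
      · intro i j hij
        rw [hue, if_neg (fun h => by rcases hij with h' | h' <;> omega)]
      · ext i j
        rw [hmulH]
        by_cases hj : (j : ℕ) < k
        · rw [if_pos hj, hue i j]
          by_cases hi : (i : ℕ) < k
          · rw [if_pos ⟨hi, hj⟩]
          · rw [if_neg (fun h => hi h.1),
              if_neg (show ¬ i = j from Fin.ne_of_val_ne (by omega)),
              hrow i j (le_of_not_gt hi)]
        · rw [if_neg hj, h0 i j (le_of_not_gt hj)]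
    · rintro ⟨u, hu, hblock, rfl⟩
      have huu : u * uᵀ = 1 := by
        have := (Matrix.mem_orthogonalGroup_iff _ _).mp hu
        exact this
      have huu' : ∀ i j : Fin r, ∑ l, u i l * u j l = if i = j then (1:ℝ) else 0 := by
        intro i j
        have := congrFun (congrFun huu i) j
        rw [mul_apply] at this
        simp only [transpose_apply] at this
        rw [this, Matrix.one_apply]
      refine ⟨fun i j hj => by rw [hmulH, if_neg (by omega)], ?_⟩
      ext i j
      rw [mul_apply]
      simp only [transpose_apply]
      simp_rw [hmulH]
      rw [hHdef]
      by_cases hi : (i : ℕ) < k <;> by_cases hj : (j : ℕ) < k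
      · have : ∀ l : Fin r, (if (l : ℕ) < k then u i l else 0) *
            (if (l : ℕ) < k then u j l else 0) = u i l * u j l := by
          intro l
          by_cases hl : (l : ℕ) < k
          · rw [if_pos hl, if_pos hl]
          · rw [if_neg hl, zero_mul,
              hblock i l (Or.inr (le_of_not_gt hl)),
              if_neg (show ¬ i = l from Fin.ne_of_val_ne (by omega)), zero_mul]
        simp_rw [this]
        rw [huu']
        by_cases h : i = j <;> simp [h, hi, hj]
      · have : ∀ l : Fin r, (if (l : ℕ) < k then u i l else 0) *
            (if (l : ℕ) < k then u j l else 0) = 0 := by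
          intro l
          by_cases hl : (l : ℕ) < k
          · rw [if_pos hl, if_pos hl,
              hblock j l (Or.inl (le_of_not_gt hj)),
              if_neg (show ¬ j = l from Fin.ne_of_val_ne (by omega)), mul_zero]
          · rw [if_neg hl, zero_mul]
        simp_rw [this]
        rw [Finset.sum_const_zero, if_neg (fun h => by omega)]
      · have : ∀ l : Fin r, (if (l : ℕ) < k then u i l else 0) *
            (if (l : ℕ) < k then u j l else 0) = 0 := by
          intro l
          by_cases hl : (l : ℕ) < k
          · rw [if_pos hl, if_pos hl,
              hblock i l (Or.inl (le_of_not_gt hi)),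
              if_neg (show ¬ i = l from Fin.ne_of_val_ne (by omega)), zero_mul]
          · rw [if_neg hl, zero_mul]
        simp_rw [this]
        rw [Finset.sum_const_zero, if_neg (fun h => hi h.2)]
      · have : ∀ l : Fin r, (if (l : ℕ) < k then u i l else 0) *
            (if (l : ℕ) < k then u j l else 0) = 0 := by
          intro l
          by_cases hl : (l : ℕ) < k
          · rw [if_pos hl, if_pos hl,
              hblock i l (Or.inl (le_of_not_gt hi)),
              if_neg (show ¬ i = l from Fin.ne_of_val_ne (by omega)), zero_mul]
          · rw [if_neg hl, zero_mul]
        simp_rw [this]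
        rw [Finset.sum_const_zero, if_neg (fun h => hi h.2)]
end

section
/- The convex hull of the image of the map μ⁽¹⁾ : ℝ² → ℝ³, (h₁, h₂) ↦ (h₁², h₂², (h₁ + h₂)²), equals the image of the map μ⁽²⁾ : (ℝ²)² → ℝ³, ((h₁,k₁),(h₂,k₂)) ↦ (h₁² + k₁², h₂² + k₂², (h₁+h₂)² + (k₁+k₂)²). -/
/-- Realize any admissible (norm², norm², inner) triple by two vectors in ℝ². -/
lemma key19 (a b p : ℝ) (ha : 0 ≤ a) (hb : 0 ≤ b) (hp : p ^ 2 ≤ a * b) :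
    ∃ u v : ℝ × ℝ, u.1 ^ 2 + u.2 ^ 2 = a ∧ v.1 ^ 2 + v.2 ^ 2 = b ∧
      u.1 * v.1 + u.2 * v.2 = p := by
  rcases eq_or_lt_of_le ha with h | h
  · have hp0 : p = 0 := by nlinarith
    exact ⟨(0, 0), (Real.sqrt b, 0), by simp [← h], by
      simp [Real.sq_sqrt hb], by simp [hp0]⟩
  · have hsa : Real.sqrt a ^ 2 = a := Real.sq_sqrt ha
    have hsapos : 0 < Real.sqrt a := Real.sqrt_pos.2 h
    have hrem : 0 ≤ b - p ^ 2 / a := by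
      rw [sub_nonneg, div_le_iff₀ h]
      nlinarith
    refine ⟨(Real.sqrt a, 0), (p / Real.sqrt a, Real.sqrt (b - p ^ 2 / a)), ?_, ?_, ?_⟩
    · simp [hsa]
    · have hr2 : Real.sqrt (b - p ^ 2 / a) ^ 2 = b - p ^ 2 / a := Real.sq_sqrt hrem
      show (p / Real.sqrt a) ^ 2 + Real.sqrt (b - p ^ 2 / a) ^ 2 = b
      rw [hr2, div_pow, hsa]
      field_simp
      ring
    · show Real.sqrt a * (p / Real.sqrt a) + 0 * _ = p
      field_simp
      simp

/-- Description of the range of μ⁽²⁾. -/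
lemma range19 :
    Set.range (fun H : (ℝ × ℝ) × (ℝ × ℝ) =>
          ((H.1.1 ^ 2 + H.1.2 ^ 2, H.2.1 ^ 2 + H.2.2 ^ 2,
            (H.1.1 + H.2.1) ^ 2 + (H.1.2 + H.2.2) ^ 2) : ℝ × ℝ × ℝ))
      = {x : ℝ × ℝ × ℝ | ∃ a b p : ℝ, 0 ≤ a ∧ 0 ≤ b ∧ p ^ 2 ≤ a * b ∧
          x = (a, b, a + b + 2 * p)} := by
  ext x
  constructor
  · rintro ⟨⟨⟨h1, k1⟩, ⟨h2, k2⟩⟩, rfl⟩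
    refine ⟨h1 ^ 2 + k1 ^ 2, h2 ^ 2 + k2 ^ 2, h1 * h2 + k1 * k2,
      by positivity, by positivity, by nlinarith [sq_nonneg (h1 * k2 - h2 * k1)], ?_⟩
    simp only [Prod.mk.injEq, true_and]
    ring
  · rintro ⟨a, b, p, ha, hb, hp, rfl⟩
    obtain ⟨u, v, hu, hv, huv⟩ := key19 a b p ha hb hp
    refine ⟨(u, v), ?_⟩
    simp only [Prod.mk.injEq]
    exact ⟨hu, hv, by linear_combination hu + hv + 2 * huv⟩

/-- The convex hull of the image of `μ⁽¹⁾(h₁,h₂) = (h₁², h₂², (h₁+h₂)²)` equals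
the image of `μ⁽²⁾((h₁,k₁),(h₂,k₂)) = (h₁²+k₁², h₂²+k₂², (h₁+h₂)²+(k₁+k₂)²)`. -/
theorem stmt19 :
    convexHull ℝ
        (Set.range fun H : ℝ × ℝ => (H.1 ^ 2, H.2 ^ 2, (H.1 + H.2) ^ 2))
      = Set.range (fun H : (ℝ × ℝ) × (ℝ × ℝ) =>
          ((H.1.1 ^ 2 + H.1.2 ^ 2, H.2.1 ^ 2 + H.2.2 ^ 2,
            (H.1.1 + H.2.1) ^ 2 + (H.1.2 + H.2.2) ^ 2) : ℝ × ℝ × ℝ)) := by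
  rw [range19]
  apply le_antisymm
  · apply convexHull_min
    · rintro x ⟨⟨h1, h2⟩, rfl⟩
      refine ⟨h1 ^ 2, h2 ^ 2, h1 * h2, by positivity, by positivity, by nlinarith, ?_⟩
      simp only [Prod.mk.injEq, true_and]
      ring
    · rintro x ⟨a, b, p, ha, hb, hp, rfl⟩ y ⟨a', b', p', ha', hb', hp', rfl⟩
        t s ht hs hts
      have hab : p ^ 2 * p' ^ 2 ≤ (a * b) * (a' * b') :=
        mul_le_mul hp hp' (sq_nonneg _) (by positivity)
      have hY : 0 ≤ a * b' + a' * b := by positivity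
      have hX2 : (2 * p * p') ^ 2 ≤ (a * b' + a' * b) ^ 2 := by
        nlinarith [sq_nonneg (a * b' - a' * b)]
      have hcross : 2 * p * p' ≤ a * b' + a' * b := by
        nlinarith [sq_nonneg (a * b' + a' * b - 2 * p * p')]
      refine ⟨t * a + s * a', t * b + s * b', t * p + s * p',
        by positivity, by positivity, ?_, ?_⟩
      · nlinarith [mul_nonneg (sq_nonneg t) (sub_nonneg.2 hp),
          mul_nonneg (sq_nonneg s) (sub_nonneg.2 hp'),
          mul_nonneg (mul_nonneg ht hs) (sub_nonneg.2 hcross)]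
      · simp only [Prod.smul_mk, smul_eq_mul, Prod.mk_add_mk, Prod.mk.injEq]
        refine ⟨trivial, trivial, ?_⟩
        ring
  · rintro x ⟨a, b, p, ha, hb, hp, rfl⟩
    obtain ⟨u, v, hu, hv, huv⟩ := key19 a b p ha hb hp
    have h2 : Real.sqrt 2 ^ 2 = 2 := Real.sq_sqrt (by norm_num)
    have hmem1 : (((Real.sqrt 2 * u.1) ^ 2, (Real.sqrt 2 * v.1) ^ 2,
        (Real.sqrt 2 * u.1 + Real.sqrt 2 * v.1) ^ 2) : ℝ × ℝ × ℝ) ∈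
        convexHull ℝ (Set.range fun H : ℝ × ℝ =>
          ((H.1 ^ 2, H.2 ^ 2, (H.1 + H.2) ^ 2) : ℝ × ℝ × ℝ)) :=
      subset_convexHull ℝ _ ⟨(Real.sqrt 2 * u.1, Real.sqrt 2 * v.1), rfl⟩
    have hmem2 : (((Real.sqrt 2 * u.2) ^ 2, (Real.sqrt 2 * v.2) ^ 2,
        (Real.sqrt 2 * u.2 + Real.sqrt 2 * v.2) ^ 2) : ℝ × ℝ × ℝ) ∈
        convexHull ℝ (Set.range fun H : ℝ × ℝ =>
          ((H.1 ^ 2, H.2 ^ 2, (H.1 + H.2) ^ 2) : ℝ × ℝ × ℝ)) :=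
      subset_convexHull ℝ _ ⟨(Real.sqrt 2 * u.2, Real.sqrt 2 * v.2), rfl⟩
    have hc := (convex_convexHull ℝ _) hmem1 hmem2 (by norm_num : (0:ℝ) ≤ 1/2)
      (by norm_num : (0:ℝ) ≤ 1/2) (by norm_num : (1:ℝ)/2 + 1/2 = 1)
    convert hc using 2
    · simp only [Prod.smul_mk, smul_eq_mul, Prod.mk_add_mk]
      linear_combination (-1 : ℝ) * hu - (u.1 ^ 2 + u.2 ^ 2) / 2 * h2
    · simp only [Prod.smul_mk, smul_eq_mul, Prod.mk_add_mk, Prod.mk.injEq]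
      refine ⟨?_, ?_⟩
      · linear_combination (-1 : ℝ) * hv - (v.1 ^ 2 + v.2 ^ 2) / 2 * h2
      · linear_combination (-1 : ℝ) * hu - hv - 2 * huv -
          ((u.1 + v.1) ^ 2 + (u.2 + v.2) ^ 2) / 2 * h2
end
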